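/- Let A = (S, Σ, δ, p, s₀) be a stochastic deterministic finite automaton such that for every state s reachable from s₀ via transitions of positive probability there exists a state s' reachable from s via transitions of positive probability (possibly s' = s) with ∑_{λ∈Σ} p(s',λ) < 1. Then ∑_{t ∈ Σ*} L_A(t) = 1, i.e., L_A is a stochastic language (a probability distribution over traces). -/
import Mathlib


open scoped Classical BigOperators

/-- Vertices of a stochastic directed action graph: the input node `inp`,
the output node `out`, and the action-labeled nodes `node n` for `n : N`. -/
inductive Vtx (N : Type) where
  | inp : Vtx N
  | out : Vtx N
  | node : N → Vtx N
  deriving DecidableEq, Fintype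

/-- Stochastic deterministic finite automaton over states `S` and actions `Act`. -/
structure SDFA (S Act : Type) [Fintype S] [Fintype Act] where
  δ : S → Act → S
  p : S → Act → ℝ
  s0 : S
  p_nonneg : ∀ s a, 0 ≤ p s a
  p_le_one : ∀ s a, p s a ≤ 1
  sum_le_one : ∀ s, ∑ a, p s a ≤ 1

variable {S Act : Type} [Fintype S] [Fintype Act]

/-- `π(s, t)` defined recursively from a transition function `δ` and
transition probability function `p`:
`π(s, ε) = 1 − ∑_{λ} p(s,λ)` and `π(s, λ·t') = p(s,λ) · π(δ(s,λ), t')`. -/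
def piFun {σ : Type} (δ : σ → Act → σ) (p : σ → Act → ℝ) : σ → List Act → ℝ
  | s, [] => 1 - ∑ a, p s a
  | s, a :: t => p s a * piFun δ p (δ s a) t

/-- The function `π_A` of an SDFA `A`. -/
def SDFA.pi (M : SDFA S Act) : S → List Act → ℝ := piFun M.δ M.p

/-- The stochastic language of an SDFA: `L_A(t) = π_A(s₀, t)`. -/
def SDFA.lang (M : SDFA S Act) (t : List Act) : ℝ := M.pi M.s0 t

/-- The state reached from `s` by running the word `w`. -/
def SDFA.run (M : SDFA S Act) : S → List Act → S
  | s, [] => s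
  | s, a :: w => M.run (M.δ s a) w

/-- `posWord M s w` holds if every transition along `w` from `s` has positive probability. -/
def SDFA.posWord (M : SDFA S Act) : S → List Act → Prop
  | _, [] => True
  | s, a :: w => 0 < M.p s a ∧ M.posWord (M.δ s a) w

/-- `y` is reachable from `x` via transitions of positive probability. -/
def SDFA.Reach (M : SDFA S Act) (x y : S) : Prop :=
  ∃ w : List Act, M.posWord x w ∧ M.run x w = y

/-- Stochastic directed action graph over nodes `N` and actions `Act`.
The flow relation `γ` never enters the input node and never leaves the output
node; the flow probability function `q` is extended by `0` outside of `γ`,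
and the flow probabilities on the outgoing arcs of every node (including the
input node) sum to `1`. -/
structure SDAG (N Act : Type) [Fintype N] [Fintype Act] where
  β : N → Act
  γ : Vtx N → Vtx N → Prop
  q : Vtx N → Vtx N → ℝ
  q_nonneg : ∀ x y, 0 ≤ q x y
  q_le_one : ∀ x y, q x y ≤ 1
  q_eq_zero : ∀ x y, ¬ γ x y → q x y = 0
  no_into_inp : ∀ x, ¬ γ x Vtx.inp
  no_from_out : ∀ y, ¬ γ Vtx.out y
  sum_q : ∀ x : Vtx N, x ≠ Vtx.out → ∑ y, q x y = 1

/-- An execution: a finite sequence of vertices beginning with the input node,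
ending with the output node, whose consecutive pairs all lie in the flow relation `γ`. -/
def IsExec {N : Type} (γ : Vtx N → Vtx N → Prop) (l : List (Vtx N)) : Prop :=
  l.Chain' γ ∧ l.head? = some Vtx.inp ∧ l.getLast? = some Vtx.out

/-- The probability of an execution: the product of `q` over its consecutive pairs. -/
def execProb {N : Type} (q : Vtx N → Vtx N → ℝ) (l : List (Vtx N)) : ℝ :=
  ((l.zip l.tail).map fun pr => q pr.1 pr.2).prod

/-- The trace confirmed by an execution: the labels of its entries other than
the input and output nodes, in order. -/
def execTrace {N : Type} (β : N → Act) (l : List (Vtx N)) : List Act :=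
  l.filterMap (fun v => match v with | Vtx.node n => some (β n) | _ => none)

/-- The stochastic language of an action graph given by flow relation `γ`,
flow probabilities `q` and labeling `β`: `L(t)` is the sum of the probabilities
of all executions confirming `t` (`0` if there are none). -/
noncomputable def gLang {N : Type} (γ : Vtx N → Vtx N → Prop)
    (q : Vtx N → Vtx N → ℝ) (β : N → Act) (t : List Act) : ℝ :=
  ∑' l : {l : List (Vtx N) // IsExec γ l ∧ execTrace β l = t}, execProb q (l : List (Vtx N))

/-- The stochastic language of an SDAG. -/
noncomputable def SDAG.lang {N : Type} [Fintype N] (G : SDAG N Act) : List Act → ℝ :=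
  gLang G.γ G.q G.β

/-- A (γ, β) action-graph structure is deterministic: distinct successors of any
node in `N ∪ {i}` carry different labels. -/
def IsDetData {N : Type} (γ : Vtx N → Vtx N → Prop) (β : N → Act) : Prop :=
  ∀ x : Vtx N, x ≠ Vtx.out → ∀ n₁ n₂ : N,
    γ x (Vtx.node n₁) → γ x (Vtx.node n₂) → n₁ ≠ n₂ → β n₁ ≠ β n₂

/-- A deterministic SDAG. -/
def SDAG.IsDet {N : Type} [Fintype N] (G : SDAG N Act) : Prop := IsDetData G.γ G.β

/-- The transitions of an SDFA: pairs (state, action) of positive probability;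
the transition `(x, λ)` represents the triple `(x, λ, δ(x,λ))`. -/
abbrev SDFA.TransOf (M : SDFA S Act) : Type := {xa : S × Act // 0 < M.p xa.1 xa.2}

/-- The target state of a transition. -/
def SDFA.tgt (M : SDFA S Act) (n : M.TransOf) : S := M.δ n.1.1 n.1.2

/-- The labeling function of `SDAG(A)`: a transition `(x, λ, y)` is labeled `λ`. -/
def dagBeta (M : SDFA S Act) (n : M.TransOf) : Act := n.1.2

/-- The flow relation of `SDAG(A)`. -/
def dagGamma (M : SDFA S Act) : Vtx M.TransOf → Vtx M.TransOf → Prop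
  | Vtx.inp, Vtx.node n => n.1.1 = M.s0
  | Vtx.inp, Vtx.out => ∑ μ, M.p M.s0 μ < 1
  | Vtx.node m, Vtx.node n => n.1.1 = M.tgt m
  | Vtx.node m, Vtx.out => ∑ μ, M.p (M.tgt m) μ < 1
  | _, _ => False

/-- The flow probability function of `SDAG(A)` (extended by `0` outside the arcs). -/
noncomputable def dagQ (M : SDFA S Act) : Vtx M.TransOf → Vtx M.TransOf → ℝ
  | Vtx.inp, Vtx.node n => if n.1.1 = M.s0 then M.p n.1.1 n.1.2 else 0
  | Vtx.inp, Vtx.out =>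
      if ∑ μ, M.p M.s0 μ < 1 then 1 - ∑ μ, M.p M.s0 μ else 0
  | Vtx.node m, Vtx.node n => if n.1.1 = M.tgt m then M.p n.1.1 n.1.2 else 0
  | Vtx.node m, Vtx.out =>
      if ∑ μ, M.p (M.tgt m) μ < 1 then 1 - ∑ μ, M.p (M.tgt m) μ else 0
  | _, _ => 0

/-- The transition probability function of `SFA(G)`:
`p(x,λ) = ∑_{y ∈ N : (x,y) ∈ γ, β(y) = λ} q(x,y)`. -/
noncomputable def sfaP {N : Type} [Fintype N] (G : SDAG N Act) (x : Vtx N) (a : Act) : ℝ :=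
  ∑ y : N, if G.γ x (Vtx.node y) ∧ G.β y = a then G.q x (Vtx.node y) else 0


section AuxProof

variable {S Act : Type} [Fintype S] [Fintype Act]

namespace SDFA

/-- Product of transition probabilities along a word. -/
def pw (M : SDFA S Act) : S → List Act → ℝ
  | _, [] => 1
  | s, a :: w => M.p s a * M.pw (M.δ s a) w

/-- Survival probability: probability of taking at least `n` steps. -/
def surv (M : SDFA S Act) : S → ℕ → ℝ
  | _, 0 => 1
  | s, n + 1 => ∑ a, M.p s a * M.surv (M.δ s a) n

@[simp] lemma pw_nil (M : SDFA S Act) (s : S) : M.pw s [] = 1 := rfl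
@[simp] lemma pw_cons (M : SDFA S Act) (s : S) (a : Act) (w : List Act) :
    M.pw s (a :: w) = M.p s a * M.pw (M.δ s a) w := rfl
@[simp] lemma surv_zero (M : SDFA S Act) (s : S) : M.surv s 0 = 1 := rfl
@[simp] lemma surv_succ (M : SDFA S Act) (s : S) (n : ℕ) :
    M.surv s (n + 1) = ∑ a, M.p s a * M.surv (M.δ s a) n := rfl
@[simp] lemma pi_nil (M : SDFA S Act) (s : S) : M.pi s [] = 1 - ∑ a, M.p s a := rfl
@[simp] lemma pi_cons (M : SDFA S Act) (s : S) (a : Act) (w : List Act) :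
    M.pi s (a :: w) = M.p s a * M.pi (M.δ s a) w := rfl
@[simp] lemma run_nil (M : SDFA S Act) (s : S) : M.run s [] = s := rfl
@[simp] lemma run_cons (M : SDFA S Act) (s : S) (a : Act) (w : List Act) :
    M.run s (a :: w) = M.run (M.δ s a) w := rfl

lemma pw_nonneg (M : SDFA S Act) : ∀ (w : List Act) (s : S), 0 ≤ M.pw s w
  | [], _ => zero_le_one
  | a :: w, s => mul_nonneg (M.p_nonneg s a) (pw_nonneg M w _)

lemma defect_nonneg (M : SDFA S Act) (s : S) : 0 ≤ 1 - ∑ a, M.p s a :=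
  sub_nonneg.2 (M.sum_le_one s)

lemma pi_eq (M : SDFA S Act) : ∀ (w : List Act) (s : S),
    M.pi s w = M.pw s w * (1 - ∑ a, M.p (M.run s w) a)
  | [], s => by simp
  | a :: w, s => by simp [pi_eq M w, mul_assoc]

lemma pi_nonneg (M : SDFA S Act) (s : S) (w : List Act) : 0 ≤ M.pi s w := by
  rw [pi_eq]; exact mul_nonneg (M.pw_nonneg w s) (M.defect_nonneg _)

lemma surv_nonneg (M : SDFA S Act) : ∀ (n : ℕ) (s : S), 0 ≤ M.surv s n
  | 0, s => zero_le_one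
  | n + 1, s => Finset.sum_nonneg fun a _ =>
      mul_nonneg (M.p_nonneg s a) (surv_nonneg M n _)

lemma surv_le_one (M : SDFA S Act) : ∀ (n : ℕ) (s : S), M.surv s n ≤ 1
  | 0, s => le_refl 1
  | n + 1, s => by
      calc M.surv s (n + 1) ≤ ∑ a, M.p s a * 1 :=
            Finset.sum_le_sum fun a _ =>
              mul_le_mul_of_nonneg_left (surv_le_one M n _) (M.p_nonneg s a)
        _ ≤ 1 := by simpa using M.sum_le_one s

lemma surv_succ_le (M : SDFA S Act) : ∀ (n : ℕ) (s : S), M.surv s (n + 1) ≤ M.surv s n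
  | 0, s => by simpa using M.sum_le_one s
  | n + 1, s => Finset.sum_le_sum fun a _ =>
      mul_le_mul_of_nonneg_left (surv_succ_le M n _) (M.p_nonneg s a)

lemma surv_antitone (M : SDFA S Act) (s : S) : Antitone (M.surv s) :=
  antitone_nat_of_succ_le fun n => M.surv_succ_le n s

lemma run_append (M : SDFA S Act) : ∀ (u v : List Act) (s : S),
    M.run s (u ++ v) = M.run (M.run s u) v
  | [], v, s => rfl
  | a :: u, v, s => by simp [run_append M u v]

lemma posWord_append (M : SDFA S Act) : ∀ (u v : List Act) (s : S),
    M.posWord s u → M.posWord (M.run s u) v → M.posWord s (u ++ v)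
  | [], v, s, _, hv => hv
  | a :: u, v, s, hu, hv => ⟨hu.1, posWord_append M u v _ hu.2 hv⟩

lemma posWord_of_pw_pos (M : SDFA S Act) : ∀ (w : List Act) (s : S),
    0 < M.pw s w → M.posWord s w
  | [], s, _ => trivial
  | a :: w, s, hw => by
      rw [pw_cons] at hw
      rcases mul_pos_iff.1 hw with ⟨h1, h2⟩ | ⟨h1, _⟩
      · exact ⟨h1, posWord_of_pw_pos M w _ h2⟩
      · exact absurd (M.p_nonneg s a) (not_le.2 h1)

lemma pw_pos_of_posWord (M : SDFA S Act) : ∀ (w : List Act) (s : S),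
    M.posWord s w → 0 < M.pw s w
  | [], s, _ => one_pos
  | a :: w, s, hw => mul_pos hw.1 (pw_pos_of_posWord M w _ hw.2)

lemma reach_run (M : SDFA S Act) {x s : S} (h : M.Reach x s) {w : List Act}
    (hw : M.posWord s w) : M.Reach x (M.run s w) := by
  obtain ⟨u, hu, rfl⟩ := h
  exact ⟨u ++ w, M.posWord_append u w x hu hw, by rw [M.run_append]⟩

end SDFA

/-- All words of a given length as a finite set. -/
noncomputable def words (Act : Type) [Fintype Act] : ℕ → Finset (List Act)
  | 0 => {[]}
  | n + 1 => Finset.univ.biUnion fun a : Act => (words Act n).image (a :: ·)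

lemma mem_words : ∀ (n : ℕ) (t : List Act), t ∈ words Act n ↔ t.length = n
  | 0, t => by cases t <;> simp [words]
  | n + 1, t => by
      cases t with
      | nil => simp [words]
      | cons a w =>
          simp only [words, Finset.mem_biUnion, Finset.mem_univ, Finset.mem_image,
            true_and, List.length_cons]
          constructor
          · rintro ⟨b, x, hx, h⟩
            have h2 := (List.cons.inj h).2
            have h3 := (mem_words n x).1 hx
            rw [← h2]
            omega
          · intro hl
            exact ⟨a, w, (mem_words n w).2 (by omega), rfl⟩

lemma sum_words_succ (n : ℕ) (f : List Act → ℝ) :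
    ∑ t ∈ words Act (n + 1), f t = ∑ a : Act, ∑ t ∈ words Act n, f (a :: t) := by
  rw [words, Finset.sum_biUnion]
  · refine Finset.sum_congr rfl fun a _ => ?_
    exact Finset.sum_image fun x _ y _ h => (List.cons.inj h).2
  · intro a _ b _ hab
    simp only [Finset.disjoint_left, Finset.mem_image]
    rintro t ⟨x, _, rfl⟩ ⟨y, _, h⟩
    exact hab ((List.cons.inj h).1).symm

lemma sum_pw_words (M : SDFA S Act) : ∀ (n : ℕ) (s : S),
    ∑ t ∈ words Act n, M.pw s t = M.surv s n
  | 0, s => by simp [words]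
  | n + 1, s => by
      rw [sum_words_succ]
      simp only [SDFA.pw_cons, SDFA.surv_succ]
      exact Finset.sum_congr rfl fun a _ => by
        rw [← Finset.mul_sum, sum_pw_words M n]

lemma sum_pi_words (M : SDFA S Act) : ∀ (n : ℕ) (s : S),
    ∑ t ∈ words Act n, M.pi s t = M.surv s n - M.surv s (n + 1)
  | 0, s => by simp [words]
  | n + 1, s => by
      rw [sum_words_succ]
      have : ∀ a : Act, ∑ t ∈ words Act n, M.pi s (a :: t)
          = M.p s a * M.surv (M.δ s a) n - M.p s a * M.surv (M.δ s a) (n + 1) := by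
        intro a
        simp only [SDFA.pi_cons]
        rw [← Finset.mul_sum, sum_pi_words M n, mul_sub]
      rw [Finset.sum_congr rfl fun a _ => this a, Finset.sum_sub_distrib]
      simp

lemma surv_add (M : SDFA S Act) : ∀ (n : ℕ) (m : ℕ) (s : S),
    M.surv s (n + m) = ∑ t ∈ words Act n, M.pw s t * M.surv (M.run s t) m
  | 0, m, s => by simp [words]
  | n + 1, m, s => by
      rw [sum_words_succ]
      have h1 : n + 1 + m = (n + m) + 1 := by omega
      rw [h1, SDFA.surv_succ]
      refine Finset.sum_congr rfl fun a _ => ?_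
      rw [surv_add M n m (M.δ s a), Finset.mul_sum]
      refine Finset.sum_congr rfl fun t _ => ?_
      simp [mul_assoc]

/-- Words of length `< n`. -/
noncomputable def wordsLt (Act : Type) [Fintype Act] (n : ℕ) : Finset (List Act) :=
  (Finset.range n).biUnion (words Act)

lemma mem_wordsLt (n : ℕ) (t : List Act) : t ∈ wordsLt Act n ↔ t.length < n := by
  simp only [wordsLt, Finset.mem_biUnion, Finset.mem_range]
  constructor
  · rintro ⟨k, hk, ht⟩; rw [(mem_words k t).1 ht] at *; exact hk
  · intro h; exact ⟨t.length, h, (mem_words _ t).2 rfl⟩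

lemma sum_pi_wordsLt (M : SDFA S Act) (n : ℕ) (s : S) :
    ∑ t ∈ wordsLt Act n, M.pi s t = 1 - M.surv s n := by
  rw [wordsLt, Finset.sum_biUnion]
  · rw [Finset.sum_congr rfl fun k _ => sum_pi_words M k s,
      Finset.sum_range_sub' (fun k => M.surv s k) n, SDFA.surv_zero]
  · intro a _ b _ hab
    simp only [Finset.disjoint_left]
    intro t ht ht'
    rw [mem_words] at ht ht'
    exact hab (ht ▸ ht')

lemma key_bound (M : SDFA S Act) (s : S) (w : List Act) :
    M.surv s (w.length + 1) ≤ 1 - M.pi s w := by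
  have h1 := sum_pi_wordsLt M (w.length + 1) s
  have hmem : w ∈ wordsLt Act (w.length + 1) := (mem_wordsLt _ w).2 (by omega)
  have h2 : M.pi s w ≤ ∑ t ∈ wordsLt Act (w.length + 1), M.pi s t :=
    Finset.single_le_sum (fun t _ => M.pi_nonneg s t) hmem
  linarith

end AuxProof

/-- If for every state `s` reachable from `s₀` via transitions of
positive probability there is a state `s'` reachable from `s` via transitions of
positive probability with `∑_{λ} p(s',λ) < 1`, then `∑_{t ∈ Σ*} L_A(t) = 1`,
i.e. `L_A` is a stochastic language (a probability distribution over traces). -/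
theorem sdfa_lang_hasSum_one {S Act : Type} [Fintype S] [Fintype Act]
    (M : SDFA S Act)
    (h : ∀ s : S, M.Reach M.s0 s → ∃ s' : S, M.Reach s s' ∧ ∑ a, M.p s' a < 1) :
    HasSum M.lang 1 := by
  classical
  -- choose escape words
  have H : ∀ s : S, ∃ w : List Act,
      M.Reach M.s0 s → (M.posWord s w ∧ ∑ a, M.p (M.run s w) a < 1) := by
    intro s
    by_cases hs : M.Reach M.s0 s
    · obtain ⟨s', ⟨w, hw, hrun⟩, hlt⟩ := h s hs
      exact ⟨w, fun _ => ⟨hw, by rw [hrun]; exact hlt⟩⟩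
    · exact ⟨[], fun c => absurd c hs⟩
  choose W hW using H
  set K : ℕ := (Finset.univ.sup fun s : S => (W s).length) + 1 with hK
  have hKs : ∀ s : S, (W s).length + 1 ≤ K := fun s => by
    have h2 : (W s).length ≤ Finset.univ.sup fun s : S => (W s).length := by
      exact Finset.le_sup (f := fun s : S => (W s).length) (Finset.mem_univ s)
    omega
  set R : Finset S := Finset.univ.filter (fun s => M.Reach M.s0 s) with hR
  have hs0R : M.s0 ∈ R := by
    simp only [hR, Finset.mem_filter, Finset.mem_univ, true_and]
    exact ⟨[], trivial, rfl⟩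
  have hRne : R.Nonempty := ⟨M.s0, hs0R⟩
  set c : ℝ := R.sup' hRne (fun s => 1 - M.pi s (W s)) with hc
  have hmemR : ∀ s ∈ R, M.Reach M.s0 s := fun s hs => by
    simpa [hR] using hs
  -- pi s (W s) is positive for reachable s
  have hpi_pos : ∀ s ∈ R, 0 < M.pi s (W s) := by
    intro s hs
    obtain ⟨hpos, hlt⟩ := hW s (hmemR s hs)
    rw [M.pi_eq]
    exact mul_pos (M.pw_pos_of_posWord _ s hpos) (by linarith)
  have hc1 : c < 1 := by
    rw [hc, Finset.sup'_lt_iff]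
    intro s hs
    have := hpi_pos s hs
    linarith
  have hsurvK : ∀ s ∈ R, M.surv s K ≤ c := by
    intro s hs
    calc M.surv s K ≤ M.surv s ((W s).length + 1) := M.surv_antitone s (hKs s)
      _ ≤ 1 - M.pi s (W s) := key_bound M s (W s)
      _ ≤ c := by rw [hc]; exact Finset.le_sup' (f := fun s => 1 - M.pi s (W s)) hs
  have hc0 : 0 ≤ c := le_trans (M.surv_nonneg K M.s0) (hsurvK M.s0 hs0R)
  -- contraction
  have hcontr : ∀ n : ℕ, M.surv M.s0 (n + K) ≤ c * M.surv M.s0 n := by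
    intro n
    rw [surv_add, ← sum_pw_words M n M.s0, Finset.mul_sum]
    refine Finset.sum_le_sum fun t ht => ?_
    rcases (M.pw_nonneg t M.s0).eq_or_lt with heq | hlt
    · rw [← heq]; simp
    · have hreach : M.run M.s0 t ∈ R := by
        simp only [hR, Finset.mem_filter, Finset.mem_univ, true_and]
        exact M.reach_run ⟨[], trivial, rfl⟩ (M.posWord_of_pw_pos t M.s0 hlt)
      calc M.pw M.s0 t * M.surv (M.run M.s0 t) K
          ≤ M.pw M.s0 t * c := mul_le_mul_of_nonneg_left (hsurvK _ hreach) hlt.le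
        _ = c * M.pw M.s0 t := mul_comm _ _
  have hiter : ∀ m : ℕ, M.surv M.s0 (m * K) ≤ c ^ m := by
    intro m
    induction m with
    | zero => simp
    | succ m ih =>
        have h1 : (m + 1) * K = m * K + K := by ring
        calc M.surv M.s0 ((m + 1) * K) = M.surv M.s0 (m * K + K) := by rw [h1]
          _ ≤ c * M.surv M.s0 (m * K) := hcontr (m * K)
          _ ≤ c * c ^ m := mul_le_mul_of_nonneg_left ih hc0
          _ = c ^ (m + 1) := (pow_succ' c m).symm
  -- conclude via IsLUB
  refine hasSum_of_isLUB_of_nonneg 1 (fun t => M.pi_nonneg M.s0 t) ?_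
  constructor
  · rintro x ⟨F, rfl⟩
    set n : ℕ := (F.sup fun t : List Act => t.length) + 1 with hn
    have hsub : F ⊆ wordsLt Act n := by
      intro t ht
      rw [mem_wordsLt]
      have h2 : t.length ≤ F.sup fun t : List Act => t.length := by
        exact Finset.le_sup (f := fun t : List Act => t.length) ht
      omega
    calc ∑ t ∈ F, M.lang t ≤ ∑ t ∈ wordsLt Act n, M.lang t :=
          Finset.sum_le_sum_of_subset_of_nonneg hsub fun t _ _ => M.pi_nonneg M.s0 t
      _ = 1 - M.surv M.s0 n := sum_pi_wordsLt M n M.s0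
      _ ≤ 1 := by have := M.surv_nonneg n M.s0; linarith
  · intro b hb
    have hm : ∀ m : ℕ, 1 - c ^ m ≤ b := by
      intro m
      have h1 : ∑ t ∈ wordsLt Act (m * K), M.pi M.s0 t ≤ b :=
        hb ⟨wordsLt Act (m * K), rfl⟩
      rw [sum_pi_wordsLt M (m * K) M.s0] at h1
      have := hiter m
      linarith
    have hlim : Filter.Tendsto (fun m : ℕ => 1 - c ^ m) Filter.atTop (nhds 1) := by
      have := tendsto_pow_atTop_nhds_zero_of_lt_one hc0 hc1
      simpa using Filter.Tendsto.const_sub 1 this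
    exact le_of_tendsto' hlim hm
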